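/- Let N be a positive integer, let A be an N×N complex matrix, let Ω be an invertible N×N complex matrix, and suppose Ω A Ω⁻¹ = diag(a₁,…,a_N) is a diagonal matrix with real diagonal entries. Then for every function c : Fin N → ℝ with c(n) > 0 for all n, the matrix Θ(c) = Ωᴴ · diag(c(1)²,…,c(N)²) · Ω is a positive-definite Hermitian matrix satisfying Aᴴ Θ(c) = Θ(c) A. -/

import Mathlib

open scoped ComplexOrder
open Matrix

/-- If `Ω A Ω⁻¹` is diagonal with real entries, then for every positive
rescaling `c` the matrix `Θ(c) = Ωᴴ diag(c²) Ω` is a positive-definite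
Hermitian metric with respect to which `A` is quasi-Hermitian. -/
theorem rescaled_metric_posDef_and_quasiHermitian (N : ℕ) (hN : 0 < N)
    (A Ω : Matrix (Fin N) (Fin N) ℂ) (hΩ : IsUnit Ω) (a : Fin N → ℝ)
    (hdiag : Ω * A * Ω⁻¹ = Matrix.diagonal fun n => (a n : ℂ))
    (c : Fin N → ℝ) (hc : ∀ n, 0 < c n) :
    (Ωᴴ * Matrix.diagonal (fun n => ((c n : ℂ)) ^ 2) * Ω).IsHermitian ∧
    (Ωᴴ * Matrix.diagonal (fun n => ((c n : ℂ)) ^ 2) * Ω).PosDef ∧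
    Aᴴ * (Ωᴴ * Matrix.diagonal (fun n => ((c n : ℂ)) ^ 2) * Ω) =
      (Ωᴴ * Matrix.diagonal (fun n => ((c n : ℂ)) ^ 2) * Ω) * A := by
  have hD : (Matrix.diagonal (fun n => ((c n : ℂ)) ^ 2)).PosDef := by
    apply Matrix.PosDef.diagonal
    intro i
    have h : (0:ℝ) < (c i)^2 := pow_pos (hc i) 2
    rw [← Complex.ofReal_pow]
    exact_mod_cast h
  have hHerm : (Ωᴴ * Matrix.diagonal (fun n => ((c n : ℂ)) ^ 2) * Ω).IsHermitian := by
    have := (hD.posSemidef.conjTranspose_mul_mul_same Ω).1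
    simpa [Matrix.mul_assoc] using this
  have hPD : (Ωᴴ * Matrix.diagonal (fun n => ((c n : ℂ)) ^ 2) * Ω).PosDef := by
    refine Matrix.PosDef.of_dotProduct_mulVec_pos hHerm fun x hx => ?_
    have hΩx : Ω *ᵥ x ≠ 0 :=
      (Matrix.mulVec_injective_iff_isUnit.mpr hΩ).ne_iff' (by simp) |>.2 hx
    have := hD.dotProduct_mulVec_pos hΩx
    calc 0 < star (Ω *ᵥ x) ⬝ᵥ (Matrix.diagonal (fun n => ((c n : ℂ)) ^ 2) *ᵥ (Ω *ᵥ x)) := this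
      _ = star x ⬝ᵥ ((Ωᴴ * Matrix.diagonal (fun n => ((c n : ℂ)) ^ 2) * Ω) *ᵥ x) := by
          simp [Matrix.star_mulVec, Matrix.dotProduct_mulVec, Matrix.vecMul_vecMul,
            Matrix.mul_assoc]
  refine ⟨hHerm, hPD, ?_⟩
  -- A = Ω⁻¹ * diag(a) * Ω
  have hinv' : Ω⁻¹ * Ω = 1 := Matrix.nonsing_inv_mul Ω ((Matrix.isUnit_iff_isUnit_det Ω).mp hΩ)
  have hA : A = Ω⁻¹ * Matrix.diagonal (fun n => (a n : ℂ)) * Ω := by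
    have h1 : Ω * A = Matrix.diagonal (fun n => (a n : ℂ)) * Ω := by
      have := congrArg (· * Ω) hdiag
      simpa [Matrix.mul_assoc, hinv', Matrix.mul_one] using this
    calc A = Ω⁻¹ * (Ω * A) := by
            rw [← Matrix.mul_assoc, hinv', Matrix.one_mul]
      _ = Ω⁻¹ * Matrix.diagonal (fun n => (a n : ℂ)) * Ω := by rw [h1, Matrix.mul_assoc]
  have hinv : Ω * Ω⁻¹ = 1 := Matrix.mul_nonsing_inv Ω ((Matrix.isUnit_iff_isUnit_det Ω).mp hΩ)
  have hAH : Aᴴ = Ωᴴ * Matrix.diagonal (fun n => (a n : ℂ)) * (Ω⁻¹)ᴴ := by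
    rw [hA]
    simp [Matrix.conjTranspose_mul, Matrix.mul_assoc, Matrix.diagonal_conjTranspose]
    congr 1
    ext i j
    simp [Matrix.diagonal, Complex.conj_ofReal]
  have hinvH : (Ω⁻¹)ᴴ * Ωᴴ = 1 := by
    rw [← Matrix.conjTranspose_mul, hinv, Matrix.conjTranspose_one]
  rw [hAH, hA]
  calc Ωᴴ * Matrix.diagonal (fun n => (a n : ℂ)) * (Ω⁻¹)ᴴ *
        (Ωᴴ * Matrix.diagonal (fun n => ((c n : ℂ)) ^ 2) * Ω)
      = Ωᴴ * (Matrix.diagonal (fun n => (a n : ℂ)) * ((Ω⁻¹)ᴴ * Ωᴴ) *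
          Matrix.diagonal (fun n => ((c n : ℂ)) ^ 2)) * Ω := by
        simp only [Matrix.mul_assoc]
    _ = Ωᴴ * (Matrix.diagonal (fun n => (a n : ℂ)) *
          Matrix.diagonal (fun n => ((c n : ℂ)) ^ 2)) * Ω := by rw [hinvH, Matrix.mul_one]
    _ = Ωᴴ * (Matrix.diagonal (fun n => ((c n : ℂ)) ^ 2) *
          Matrix.diagonal (fun n => (a n : ℂ))) * Ω := by
        rw [Matrix.diagonal_mul_diagonal, Matrix.diagonal_mul_diagonal]
        have h : (fun i => (a i : ℂ) * ((c i : ℂ))^2) = fun i => ((c i : ℂ))^2 * (a i : ℂ) := by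
          funext i; ring
        rw [h]
    _ = Ωᴴ * Matrix.diagonal (fun n => ((c n : ℂ)) ^ 2) * Ω *
          (Ω⁻¹ * Matrix.diagonal (fun n => (a n : ℂ)) * Ω) := by
        simp only [Matrix.mul_assoc]
        rw [← Matrix.mul_assoc Ω Ω⁻¹, hinv, Matrix.one_mul]
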